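/- Define ℓ(ζ) := 18 + α² + αγ - (20 - βγ - 2αβ)·cos ζ - (25 - β²)·cos²ζ + 24·sin ζ, with α = 5/2 - 43/(2√41), β = 9/2 - 13/(2√41), γ = 2 + 28/√41. Then ℓ(ζ) > 0 for all ζ ∈ [π/2, π]; ℓ is strictly increasing on [0, π/2]; and ℓ(0) < 0 < ℓ(π/2), so ℓ has a unique zero in [0, π]. -/

import Mathlib

noncomputable def α : ℝ := 5/2 - 43/(2*Real.sqrt 41)
noncomputable def β : ℝ := 9/2 - 13/(2*Real.sqrt 41)
noncomputable def γ : ℝ := 2 + 28/Real.sqrt 41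

noncomputable def ℓ (ζ : ℝ) : ℝ :=
  18 + α^2 + α*γ - (20 - β*γ - 2*α*β)*Real.cos ζ
    - (25 - β^2)*Real.cos ζ^2 + 24*Real.sin ζ

private lemma hs2 : Real.sqrt 41 ^ 2 = 41 := Real.sq_sqrt (by norm_num)
private lemma hs0 : (0:ℝ) < Real.sqrt 41 := Real.sqrt_pos.mpr (by norm_num)
private lemma hs3 : Real.sqrt 41 ^ 3 = 41 * Real.sqrt 41 := by
  rw [pow_succ, hs2]
private lemma hs4 : Real.sqrt 41 ^ 4 = 1681 := by
  rw [show (4:ℕ) = 2*2 from rfl, pow_mul, hs2]; norm_num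
private lemma hs5 : Real.sqrt 41 ^ 5 = 1681 * Real.sqrt 41 := by
  rw [pow_succ, hs4]
private lemma hlb : (6.4:ℝ) < Real.sqrt 41 := by nlinarith [hs2, hs0]
private lemma hub : Real.sqrt 41 < 6.41 := by nlinarith [hs2, hs0]

private lemma hA : 20 - β*γ - 2*α*β = (113*Real.sqrt 41 - 569)/41 := by
  have hne : Real.sqrt 41 ≠ 0 := ne_of_gt hs0
  unfold α β γ
  field_simp
  ring_nf
  simp only [hs5, hs4, hs3, hs2]
  ring

private lemma hB : 25 - β^2 = (305 + 117*Real.sqrt 41)/82 := by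
  have hne : Real.sqrt 41 ≠ 0 := ne_of_gt hs0
  unfold β
  field_simp
  ring_nf
  simp only [hs5, hs4, hs3, hs2]
  ring

private lemma hC : 18 + α^2 + α*γ = (2119 - 161*Real.sqrt 41)/82 := by
  have hne : Real.sqrt 41 ≠ 0 := ne_of_gt hs0
  unfold α γ
  field_simp
  ring_nf
  simp only [hs5, hs4, hs3, hs2]
  ring

private lemma hApos : 0 < 20 - β*γ - 2*α*β := by
  rw [hA]
  apply div_pos _ (by norm_num)
  have := hlb; linarith

private lemma hBpos : 0 < 25 - β^2 := by
  rw [hB]; positivity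

private lemma hCB : 25 - β^2 < 18 + α^2 + α*γ := by
  rw [hB, hC]; have := hub; linarith

private lemma hderiv (ζ : ℝ) :
    HasDerivAt ℓ ((20 - β*γ - 2*α*β)*Real.sin ζ
      + (25 - β^2)*(2*Real.cos ζ*Real.sin ζ) + 24*Real.cos ζ) ζ := by
  have hc := Real.hasDerivAt_cos ζ
  have hsin := Real.hasDerivAt_sin ζ
  have hc2 : HasDerivAt (fun x => Real.cos x ^ 2)
      ((2:ℕ) * Real.cos ζ ^ 1 * (-Real.sin ζ)) ζ := hc.pow 2
  have h := ((((hasDerivAt_const ζ (18 + α^2 + α*γ)).sub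
      (hc.const_mul (20 - β*γ - 2*α*β))).sub
      (hc2.const_mul (25 - β^2))).add (hsin.const_mul 24))
  unfold ℓ
  refine h.congr_deriv ?_
  push_cast; ring

private lemma part1 : ∀ ζ : ℝ, Real.pi/2 ≤ ζ → ζ ≤ Real.pi → 0 < ℓ ζ := by
  intro ζ h1 h2
  have hcos : Real.cos ζ ≤ 0 :=
    Real.cos_nonpos_of_pi_div_two_le_of_le h1 (by linarith [Real.pi_pos])
  have hsin : 0 ≤ Real.sin ζ :=
    Real.sin_nonneg_of_nonneg_of_le_pi (le_trans (by positivity) h1) h2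
  have hcsq : Real.cos ζ ^ 2 ≤ 1 := by
    nlinarith [Real.neg_one_le_cos ζ, Real.cos_le_one ζ]
  have h3 := hCB
  have h4 := hApos
  have h5 := hBpos
  unfold ℓ
  nlinarith [mul_nonneg (le_of_lt h4) (neg_nonneg.mpr hcos),
    mul_le_of_le_one_right (le_of_lt h5) hcsq]

private lemma part2 : StrictMonoOn ℓ (Set.Icc 0 (Real.pi/2)) := by
  apply strictMonoOn_of_deriv_pos (convex_Icc _ _)
  · exact fun x _ => ((hderiv x).continuousAt).continuousWithinAt
  · intro x hx
    rw [interior_Icc] at hx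
    rw [(hderiv x).deriv]
    have hsin : 0 < Real.sin x :=
      Real.sin_pos_of_pos_of_lt_pi hx.1 (by linarith [Real.pi_pos, hx.2])
    have hcos : 0 < Real.cos x :=
      Real.cos_pos_of_mem_Ioo ⟨by linarith [Real.pi_pos, hx.1], hx.2⟩
    have := hApos; have := hBpos
    positivity

private lemma part3 : ℓ 0 < 0 := by
  unfold ℓ
  simp only [Real.cos_zero, Real.sin_zero]
  rw [show (18:ℝ) + α^2 + α*γ - (20 - β*γ - 2*α*β)*1 - (25 - β^2)*1^2 + 24*0
      = (18 + α^2 + α*γ) - (20 - β*γ - 2*α*β) - (25 - β^2) by ring, hA, hB, hC]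
  have := hlb
  nlinarith

private lemma part4 : 0 < ℓ (Real.pi/2) := by
  unfold ℓ
  simp only [Real.cos_pi_div_two, Real.sin_pi_div_two]
  rw [show (18:ℝ) + α^2 + α*γ - (20 - β*γ - 2*α*β)*0 - (25 - β^2)*0^2 + 24*1
      = (18 + α^2 + α*γ) + 24 by ring, hC]
  have := hub
  nlinarith

theorem stmt17 :
    (∀ ζ : ℝ, Real.pi/2 ≤ ζ → ζ ≤ Real.pi → 0 < ℓ ζ) ∧
    StrictMonoOn ℓ (Set.Icc 0 (Real.pi/2)) ∧
    ℓ 0 < 0 ∧ 0 < ℓ (Real.pi/2) ∧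
    (∃! ζ : ℝ, ζ ∈ Set.Icc 0 Real.pi ∧ ℓ ζ = 0) := by
  have hpi := Real.pi_pos
  have hcont : ContinuousOn ℓ (Set.Icc 0 (Real.pi/2)) :=
    fun x _ => ((hderiv x).continuousAt).continuousWithinAt
  refine ⟨part1, part2, part3, part4, ?_⟩
  obtain ⟨z, hz, hz0⟩ := intermediate_value_Icc (by positivity : (0:ℝ) ≤ Real.pi/2)
    hcont ⟨le_of_lt part3, le_of_lt part4⟩
  refine ⟨z, ⟨⟨hz.1, le_trans hz.2 (by linarith)⟩, hz0⟩, ?_⟩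
  rintro y ⟨⟨hy0, hyπ⟩, hy⟩
  have hylt : y < Real.pi/2 := by
    by_contra h
    push_neg at h
    exact absurd hy (ne_of_gt (part1 y h hyπ))
  have hzlt : z < Real.pi/2 := by
    rcases lt_or_eq_of_le hz.2 with h | h
    · exact h
    · exfalso; rw [h] at hz0; linarith [part4]
  exact part2.injOn ⟨hy0, le_of_lt hylt⟩ ⟨hz.1, le_of_lt hzlt⟩ (hy.trans hz0.symm)
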